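/- Suppose the Jacobi parameters (a_n), (b_n) are an N-periodic blend. Then for each i ∈ {1, 2, …, N−1}, lim_{j→∞} B_{j(N+2)+i}(x) = 𝔅_i(x) locally uniformly with respect to x ∈ ℝ; moreover lim_{j→∞} B_{(j+1)(N+2)}(x) · B_{j(N+2)+N+1}(x) · B_{j(N+2)+N}(x) = 𝒞(x) locally uniformly with respect to x ∈ ℝ, where 𝒞(x) is the 2×2 matrix with first row (0, −1) and second row (α_{N−1}/α_0, −(2x − β_0)/α_0). -/

import Mathlib

open Filter Topology

attribute [local instance] Matrix.normedAddCommGroup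

noncomputable section

abbrev Mat2 := Matrix (Fin 2) (Fin 2) ℝ

attribute [local instance] Matrix.normedSpace

lemma tendsto_mat2 {f g h k : ℕ → ℝ} {f0 g0 h0 k0 : ℝ}
    (hf : Tendsto f atTop (𝓝 f0)) (hg : Tendsto g atTop (𝓝 g0))
    (hh : Tendsto h atTop (𝓝 h0)) (hk : Tendsto k atTop (𝓝 k0)) :
    Tendsto (fun n => (!![f n, g n; h n, k n] : Mat2)) atTop (𝓝 (!![f0,g0;h0,k0] : Mat2)) := by
  have e : ∀ (p q r s : ℝ), (!![p,q;r,s] : Mat2)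
      = p • !![1,0;0,0] + q • !![0,1;0,0] + r • !![0,0;1,0] + s • !![0,0;0,1] := by
    intro p q r s
    ext i j
    fin_cases i <;> fin_cases j <;>
      simp [Matrix.add_apply, Matrix.smul_apply, smul_eq_mul]
  rw [show (fun n => (!![f n, g n; h n, k n] : Mat2))
      = fun n => f n • !![1,0;0,0] + g n • !![0,1;0,0] + h n • !![0,0;1,0] + k n • !![0,0;0,1]
      from funext fun n => e _ _ _ _, e f0 g0 h0 k0]
  exact (((hf.smul_const _).add (hg.smul_const _)).add (hh.smul_const _)).add (hk.smul_const _)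

lemma unif_smul (K : Set ℝ) (g : ℝ → ℝ) (B : ℝ) (hB : 0 ≤ B) (hg : ∀ x ∈ K, |g x| ≤ B)
    (C : ℕ → Mat2) (C0 : Mat2) (hC : Tendsto C atTop (𝓝 C0)) :
    TendstoUniformlyOn (fun j x => g x • C j) (fun x => g x • C0) atTop K := by
  refine Metric.tendstoUniformlyOn_iff.mpr ?_
  intro ε hε
  have hB1 : (0:ℝ) < B + 1 := by linarith
  have hε' : 0 < ε / (B + 1) := by positivity
  filter_upwards [Metric.tendsto_nhds.mp hC _ hε'] with j hj x hx
  have h1 : ‖C0 - C j‖ ≤ ε / (B+1) := by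
    rw [← dist_eq_norm, dist_comm]; exact hj.le
  calc dist (g x • C0) (g x • C j) = |g x| * ‖C0 - C j‖ := by
        rw [dist_eq_norm, ← smul_sub, norm_smul, Real.norm_eq_abs]
    _ ≤ B * (ε / (B+1)) := mul_le_mul (hg x hx) h1 (norm_nonneg _) hB
    _ < ε := by rw [mul_div_assoc'] ; rw [div_lt_iff₀ hB1]; nlinarith

lemma aux_cubic (A C D E : ℕ → Mat2) (A0 C0 D0 E0 : Mat2)
    (hA : Tendsto A atTop (𝓝 A0)) (hC : Tendsto C atTop (𝓝 C0))
    (hD : Tendsto D atTop (𝓝 D0)) (hE : Tendsto E atTop (𝓝 E0)) :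
    TendstoLocallyUniformly (fun j (x:ℝ) => A j + x • C j + x^2 • D j + x^3 • E j)
      (fun x => A0 + x • C0 + x^2 • D0 + x^3 • E0) atTop := by
  rw [tendstoLocallyUniformly_iff_forall_isCompact]
  intro K hK
  obtain ⟨M, hM⟩ := hK.isBounded.exists_norm_le
  have hM0 : 0 ≤ M ∨ K = ∅ := by
    rcases K.eq_empty_or_nonempty with h | ⟨x, hx⟩
    · exact Or.inr h
    · exact Or.inl ((norm_nonneg x).trans (hM x hx))
  rcases hM0 with hM0 | rfl
  · have hconst : TendstoUniformlyOn (fun j (_ : ℝ) => A j) (fun _ => A0) atTop K := by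
      refine Metric.tendstoUniformlyOn_iff.mpr ?_
      intro ε hε
      filter_upwards [Metric.tendsto_nhds.mp hA ε hε] with j hj x _
      rw [dist_comm]; exact hj
    have h1 : TendstoUniformlyOn (fun j (x:ℝ) => x • C j) (fun x => x • C0) atTop K :=
      unif_smul K id M hM0 (fun x hx => by simpa [Real.norm_eq_abs] using hM x hx) C C0 hC
    have h2 : TendstoUniformlyOn (fun j (x:ℝ) => x^2 • D j) (fun x => x^2 • D0) atTop K := by
      refine unif_smul K (fun x => x^2) (M^2) (by positivity) (fun x hx => ?_) D D0 hD
      rw [abs_pow]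
      exact pow_le_pow_left₀ (abs_nonneg x) (by simpa [Real.norm_eq_abs] using hM x hx) 2
    have h3 : TendstoUniformlyOn (fun j (x:ℝ) => x^3 • E j) (fun x => x^3 • E0) atTop K := by
      refine unif_smul K (fun x => x^3) (M^3) (by positivity) (fun x hx => ?_) E E0 hE
      rw [abs_pow]
      exact pow_le_pow_left₀ (abs_nonneg x) (by simpa [Real.norm_eq_abs] using hM x hx) 3
    exact ((hconst.add h1).add h2).add h3
  · simp [TendstoUniformlyOn]

lemma per_add (α : ℤ → ℝ) (N : ℕ) (hαper : ∀ n : ℤ, α (n + N) = α n) :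
    ∀ (k : ℕ) (n : ℤ), α (n + (k : ℤ) * N) = α n := by
  intro k
  induction k with
  | zero => simp
  | succ m ih =>
    intro n
    have : n + ((m:ℤ)+1) * N = (n + N) + (m:ℤ) * N := by ring
    rw [Nat.cast_add, Nat.cast_one, this, ih, hαper]

lemma tendsto_blend (t : ℕ → ℝ) (γ : ℤ → ℝ)
    (hasym : Tendsto (fun n : ℕ => |t n - γ (n : ℤ)|) atTop (𝓝 0))
    (c : ℕ → ℕ) (hc : Tendsto c atTop atTop) (L : ℝ) (hL : ∀ j, γ ((c j : ℕ) : ℤ) = L) :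
    Tendsto (fun j => t (c j)) atTop (𝓝 L) := by
  have h2 : Tendsto (fun j => |t (c j) - γ ((c j : ℕ) : ℤ)|) atTop (𝓝 0) := hasym.comp hc
  simp only [hL] at h2
  rw [tendsto_iff_dist_tendsto_zero]
  simpa [Real.dist_eq] using h2


/-- The transfer matrix `B_n(x)` built from the Jacobi parameters `(a_n)`, `(b_n)`. -/
def Bmat (a b : ℕ → ℝ) (n : ℕ) (x : ℝ) : Mat2 :=
  !![0, 1; -(a (n - 1)) / a n, (x - b n) / a n]

/-- The transfer matrix `𝔅_j(x)` built from the periodic sequences `(α_n)`, `(β_n)`. -/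
def frakB (α β : ℤ → ℝ) (j : ℤ) (x : ℝ) : Mat2 :=
  !![0, 1; -(α (j - 1)) / α j, (x - β j) / α j]

/-- Proposition 7 of the paper. For an `N`-periodic blend:
`B_{j(N+2)+i}(x) → 𝔅_i(x)` for `i ∈ {1,…,N−1}` and
`B_{(j+1)(N+2)}(x)·B_{j(N+2)+N+1}(x)·B_{j(N+2)+N}(x) → 𝒞(x)`, locally uniformly on `ℝ`. -/
theorem blocks_tendsto_of_periodic_blend
    (N : ℕ) (hN : 0 < N)
    (a b ta tb tc : ℕ → ℝ) (ha : ∀ n, 0 < a n) (hta : ∀ n, 0 < ta n) (htc : ∀ n, 0 < tc n)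
    (α β : ℤ → ℝ) (hα : ∀ n, 0 < α n)
    (hαper : ∀ n : ℤ, α (n + N) = α n) (hβper : ∀ n : ℤ, β (n + N) = β n)
    (hasym_a : Tendsto (fun n : ℕ => |ta n - α (n : ℤ)|) atTop (𝓝 0))
    (hasym_b : Tendsto (fun n : ℕ => |tb n - β (n : ℤ)|) atTop (𝓝 0))
    (htc_div : Tendsto tc atTop atTop)
    (htc_ratio : Tendsto (fun m : ℕ => tc (2 * m + 1) / tc (2 * m)) atTop (𝓝 1))
    (hblend_a : ∀ k, ∀ i < N, a (k * (N + 2) + i) = ta (k * N + i))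
    (hblend_b : ∀ k, ∀ i < N, b (k * (N + 2) + i) = tb (k * N + i))
    (hblend_c : ∀ k, a (k * (N + 2) + N) = tc (2 * k) ∧
      a (k * (N + 2) + N + 1) = tc (2 * k + 1) ∧
      b (k * (N + 2) + N) = 0 ∧ b (k * (N + 2) + N + 1) = 0) :
    (∀ i : ℕ, 1 ≤ i → i < N →
      TendstoLocallyUniformly
        (fun (j : ℕ) (x : ℝ) => Bmat a b (j * (N + 2) + i) x)
        (fun x : ℝ => frakB α β (i : ℤ) x) atTop) ∧
    TendstoLocallyUniformly
      (fun (j : ℕ) (x : ℝ) =>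
        Bmat a b ((j + 1) * (N + 2)) x * Bmat a b (j * (N + 2) + N + 1) x *
          Bmat a b (j * (N + 2) + N) x)
      (fun x : ℝ => !![0, -1; α ((N : ℤ) - 1) / α 0, -(2 * x - β 0) / α 0]) atTop := by
  have hne : ∀ m : ℤ, α m ≠ 0 := fun m => (hα m).ne'
  constructor
  · rintro i hi1 hiN
    obtain ⟨i', rfl⟩ : ∃ i', i = i' + 1 := ⟨i - 1, by omega⟩
    have hc1 : Tendsto (fun j : ℕ => j * N + (i' + 1)) atTop atTop :=
      tendsto_atTop_mono
        (fun j => le_trans (Nat.le_mul_of_pos_right j hN) (Nat.le_add_right _ _)) tendsto_id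
    have hc0 : Tendsto (fun j : ℕ => j * N + i') atTop atTop :=
      tendsto_atTop_mono
        (fun j => le_trans (Nat.le_mul_of_pos_right j hN) (Nat.le_add_right _ _)) tendsto_id
    have lim1 : Tendsto (fun j => ta (j * N + (i' + 1))) atTop (𝓝 (α ((i' + 1 : ℕ) : ℤ))) :=
      tendsto_blend ta α hasym_a _ hc1 _ (fun j => by
        have h := per_add α N hαper j ((i' + 1 : ℕ) : ℤ)
        rw [← h]; congr 1; push_cast; ring)
    have lim0 : Tendsto (fun j => ta (j * N + i')) atTop (𝓝 (α (i' : ℤ))) :=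
      tendsto_blend ta α hasym_a _ hc0 _ (fun j => by
        have h := per_add α N hαper j (i' : ℤ)
        rw [← h]; congr 1; push_cast; ring)
    have limb : Tendsto (fun j => tb (j * N + (i' + 1))) atTop (𝓝 (β ((i' + 1 : ℕ) : ℤ))) :=
      tendsto_blend tb β hasym_b _ hc1 _ (fun j => by
        have h := per_add β N hβper j ((i' + 1 : ℕ) : ℤ)
        rw [← h]; congr 1; push_cast; ring)
    have key := aux_cubic
      (fun j => !![0, 1; -(ta (j * N + i') / ta (j * N + (i' + 1))),
        -(tb (j * N + (i' + 1)) / ta (j * N + (i' + 1)))])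
      (fun j => !![0, 0; 0, (ta (j * N + (i' + 1)))⁻¹])
      (fun _ => (0 : Mat2)) (fun _ => (0 : Mat2))
      !![0, 1; -(α (i' : ℤ) / α ((i' + 1 : ℕ) : ℤ)), -(β ((i' + 1 : ℕ) : ℤ) / α ((i' + 1 : ℕ) : ℤ))]
      !![0, 0; 0, (α ((i' + 1 : ℕ) : ℤ))⁻¹] 0 0
      (tendsto_mat2 tendsto_const_nhds tendsto_const_nhds
        ((lim0.div lim1 (hne _)).neg) ((limb.div lim1 (hne _)).neg))
      (tendsto_mat2 tendsto_const_nhds tendsto_const_nhds tendsto_const_nhds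
        (lim1.inv₀ (hne _)))
      tendsto_const_nhds tendsto_const_nhds
    have hfun : (fun (j : ℕ) (x : ℝ) => Bmat a b (j * (N + 2) + (i' + 1)) x)
        = (fun (j : ℕ) (x : ℝ) =>
          !![0, 1; -(ta (j * N + i') / ta (j * N + (i' + 1))),
            -(tb (j * N + (i' + 1)) / ta (j * N + (i' + 1)))]
          + x • !![0, 0; 0, (ta (j * N + (i' + 1)))⁻¹] + x^2 • (0 : Mat2) + x^3 • (0 : Mat2)) := by
      funext j x
      have e1 : a (j * (N + 2) + (i' + 1)) = ta (j * N + (i' + 1)) := hblend_a j _ hiN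
      have e0 : a (j * (N + 2) + (i' + 1) - 1) = ta (j * N + i') := by
        rw [show j * (N + 2) + (i' + 1) - 1 = j * (N + 2) + i' by
          rw [← add_assoc, Nat.add_sub_cancel]]
        exact hblend_a j i' (by omega)
      have eb : b (j * (N + 2) + (i' + 1)) = tb (j * N + (i' + 1)) := hblend_b j _ hiN
      rw [Bmat, e0, e1, eb]
      ext r s
      fin_cases r <;> fin_cases s <;>
        simp [Matrix.add_apply, Matrix.smul_apply, smul_eq_mul] <;> ring
    have hfun2 : (fun x : ℝ => frakB α β ((i' + 1 : ℕ) : ℤ) x)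
        = (fun x : ℝ =>
          !![0, 1; -(α (i' : ℤ) / α ((i' + 1 : ℕ) : ℤ)),
            -(β ((i' + 1 : ℕ) : ℤ) / α ((i' + 1 : ℕ) : ℤ))]
          + x • !![0, 0; 0, (α ((i' + 1 : ℕ) : ℤ))⁻¹] + x^2 • (0 : Mat2) + x^3 • (0 : Mat2)) := by
      funext x
      have hcast : ((i' + 1 : ℕ) : ℤ) - 1 = (i' : ℤ) := by push_cast; ring
      rw [frakB, hcast]
      ext r s
      fin_cases r <;> fin_cases s <;>
        simp [Matrix.add_apply, Matrix.smul_apply, smul_eq_mul] <;> ring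
    rw [hfun, hfun2]
    exact key
  · obtain ⟨n, rfl⟩ : ∃ n, N = n + 1 := ⟨N - 1, by omega⟩
    have h2j : Tendsto (fun j : ℕ => 2 * j) atTop atTop :=
      tendsto_atTop_mono (fun j => Nat.le_mul_of_pos_left j (by norm_num)) tendsto_id
    have h2j1 : Tendsto (fun j : ℕ => 2 * j + 1) atTop atTop :=
      tendsto_atTop_mono
        (fun j => le_trans (Nat.le_mul_of_pos_left j (by norm_num)) (Nat.le_succ _)) tendsto_id
    have hv : Tendsto (fun j => (tc (2 * j))⁻¹) atTop (𝓝 0) := by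
      have := (htc_div.comp h2j).inv_tendsto_atTop
      exact this
    have hz : Tendsto (fun j => (tc (2 * j + 1))⁻¹) atTop (𝓝 0) := by
      have := (htc_div.comp h2j1).inv_tendsto_atTop
      exact this
    have hρ : Tendsto (fun j => tc (2 * j + 1) / tc (2 * j)) atTop (𝓝 1) := htc_ratio
    have hw : Tendsto (fun j => tc (2 * j) / tc (2 * j + 1)) atTop (𝓝 1) := by
      have := htc_ratio.inv₀ one_ne_zero
      simpa [inv_div] using this
    have hcA1 : Tendsto (fun j : ℕ => j * (n + 1) + n) atTop atTop :=
      tendsto_atTop_mono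
        (fun j => le_trans (Nat.le_mul_of_pos_right j (by omega)) (Nat.le_add_right _ _))
        tendsto_id
    have hcA2 : Tendsto (fun j : ℕ => (j + 1) * (n + 1)) atTop atTop :=
      tendsto_atTop_mono
        (fun j => le_trans (Nat.le_succ j) (Nat.le_mul_of_pos_right (j + 1) (by omega)))
        tendsto_id
    have lim_ta1 : Tendsto (fun j => ta (j * (n + 1) + n)) atTop
        (𝓝 (α (((n + 1 : ℕ) : ℤ) - 1))) :=
      tendsto_blend ta α hasym_a _ hcA1 _ (fun j => by
        have h := per_add α (n + 1) hαper j (((n + 1 : ℕ) : ℤ) - 1)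
        rw [← h]; congr 1; push_cast; ring)
    have lim_ta2 : Tendsto (fun j => ta ((j + 1) * (n + 1))) atTop (𝓝 (α 0)) :=
      tendsto_blend ta α hasym_a _ hcA2 _ (fun j => by
        have h := per_add α (n + 1) hαper (j + 1) 0
        rw [← h]; congr 1; push_cast; ring)
    have lim_tb : Tendsto (fun j => tb ((j + 1) * (n + 1))) atTop (𝓝 (β 0)) :=
      tendsto_blend tb β hasym_b _ hcA2 _ (fun j => by
        have h := per_add β (n + 1) hβper (j + 1) 0
        rw [← h]; congr 1; push_cast; ring)
    have ht : Tendsto (fun j => (ta ((j + 1) * (n + 1)))⁻¹) atTop (𝓝 (α 0)⁻¹) :=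
      lim_ta2.inv₀ (hne 0)
    have hA : Tendsto (fun j =>
        (!![0, -(tc (2 * j) / tc (2 * j + 1));
          (tc (2 * j + 1) / tc (2 * j)) * (ta (j * (n + 1) + n) * (ta ((j + 1) * (n + 1)))⁻¹),
          (tc (2 * j) / tc (2 * j + 1)) * ((ta ((j + 1) * (n + 1)))⁻¹ * tb ((j + 1) * (n + 1)))]
          : Mat2)) atTop
        (𝓝 (!![0, -1; α (((n + 1 : ℕ) : ℤ) - 1) * (α 0)⁻¹, (α 0)⁻¹ * β 0] : Mat2)) := by
      refine tendsto_mat2 tendsto_const_nhds hw.neg ?_ ?_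
      · simpa using hρ.mul (lim_ta1.mul ht)
      · simpa using hw.mul (ht.mul lim_tb)
    have hC : Tendsto (fun j =>
        (!![-(ta (j * (n + 1) + n) * (tc (2 * j))⁻¹ * (tc (2 * j + 1))⁻¹), 0;
          ta (j * (n + 1) + n) * (tc (2 * j))⁻¹ * (tc (2 * j + 1))⁻¹ *
            ((ta ((j + 1) * (n + 1)))⁻¹ * tb ((j + 1) * (n + 1))),
          -((tc (2 * j + 1) / tc (2 * j)) * (ta ((j + 1) * (n + 1)))⁻¹ +
            (tc (2 * j) / tc (2 * j + 1)) * (ta ((j + 1) * (n + 1)))⁻¹)] : Mat2)) atTop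
        (𝓝 (!![0, 0; 0, -((α 0)⁻¹ + (α 0)⁻¹)] : Mat2)) := by
      refine tendsto_mat2 ?_ tendsto_const_nhds ?_ ?_
      · simpa using ((lim_ta1.mul hv).mul hz).neg
      · simpa using ((lim_ta1.mul hv).mul hz).mul (ht.mul lim_tb)
      · simpa using ((hρ.mul ht).add (hw.mul ht)).neg
    have hD : Tendsto (fun j =>
        (!![0, (tc (2 * j))⁻¹ * (tc (2 * j + 1))⁻¹;
          -(ta (j * (n + 1) + n) * (tc (2 * j))⁻¹ * (tc (2 * j + 1))⁻¹ *
            (ta ((j + 1) * (n + 1)))⁻¹),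
          -((tc (2 * j))⁻¹ * (tc (2 * j + 1))⁻¹ * (ta ((j + 1) * (n + 1)))⁻¹ *
            tb ((j + 1) * (n + 1)))] : Mat2)) atTop
        (𝓝 (!![0, 0; 0, 0] : Mat2)) := by
      refine tendsto_mat2 tendsto_const_nhds ?_ ?_ ?_
      · simpa using hv.mul hz
      · simpa using (((lim_ta1.mul hv).mul hz).mul ht).neg
      · simpa using (((hv.mul hz).mul ht).mul lim_tb).neg
    have hE : Tendsto (fun j =>
        (!![0, 0; 0, (tc (2 * j))⁻¹ * (tc (2 * j + 1))⁻¹ * (ta ((j + 1) * (n + 1)))⁻¹]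
          : Mat2)) atTop (𝓝 (!![0, 0; 0, 0] : Mat2)) := by
      refine tendsto_mat2 tendsto_const_nhds tendsto_const_nhds tendsto_const_nhds ?_
      simpa using (hv.mul hz).mul ht
    have key := aux_cubic _ _ _ _ _ _ _ _ hA hC hD hE
    have hfun : (fun (j : ℕ) (x : ℝ) =>
        Bmat a b ((j + 1) * (n + 1 + 2)) x * Bmat a b (j * (n + 1 + 2) + (n + 1) + 1) x *
          Bmat a b (j * (n + 1 + 2) + (n + 1)) x)
        = (fun (j : ℕ) (x : ℝ) =>
          !![0, -(tc (2 * j) / tc (2 * j + 1));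
            (tc (2 * j + 1) / tc (2 * j)) * (ta (j * (n + 1) + n) * (ta ((j + 1) * (n + 1)))⁻¹),
            (tc (2 * j) / tc (2 * j + 1)) * ((ta ((j + 1) * (n + 1)))⁻¹ * tb ((j + 1) * (n + 1)))]
          + x • !![-(ta (j * (n + 1) + n) * (tc (2 * j))⁻¹ * (tc (2 * j + 1))⁻¹), 0;
            ta (j * (n + 1) + n) * (tc (2 * j))⁻¹ * (tc (2 * j + 1))⁻¹ *
              ((ta ((j + 1) * (n + 1)))⁻¹ * tb ((j + 1) * (n + 1))),
            -((tc (2 * j + 1) / tc (2 * j)) * (ta ((j + 1) * (n + 1)))⁻¹ +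
              (tc (2 * j) / tc (2 * j + 1)) * (ta ((j + 1) * (n + 1)))⁻¹)]
          + x ^ 2 • !![0, (tc (2 * j))⁻¹ * (tc (2 * j + 1))⁻¹;
            -(ta (j * (n + 1) + n) * (tc (2 * j))⁻¹ * (tc (2 * j + 1))⁻¹ *
              (ta ((j + 1) * (n + 1)))⁻¹),
            -((tc (2 * j))⁻¹ * (tc (2 * j + 1))⁻¹ * (ta ((j + 1) * (n + 1)))⁻¹ *
              tb ((j + 1) * (n + 1)))]
          + x ^ 3 • !![0, 0; 0,
            (tc (2 * j))⁻¹ * (tc (2 * j + 1))⁻¹ * (ta ((j + 1) * (n + 1)))⁻¹]) := by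
      funext j x
      obtain ⟨ec1, ec2, ec3, ec4⟩ := hblend_c j
      have e3a : a ((j + 1) * (n + 1 + 2)) = ta ((j + 1) * (n + 1)) := by
        have := hblend_a (j + 1) 0 hN
        simpa using this
      have e3b : b ((j + 1) * (n + 1 + 2)) = tb ((j + 1) * (n + 1)) := by
        have := hblend_b (j + 1) 0 hN
        simpa using this
      have hidx : (j + 1) * (n + 1 + 2) - 1 = j * (n + 1 + 2) + (n + 1) + 1 := by
        rw [add_mul, one_mul]
        generalize j * (n + 1 + 2) = m
        omega
      have e3p : a ((j + 1) * (n + 1 + 2) - 1) = tc (2 * j + 1) := by rw [hidx]; exact ec2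
      have e2p : a (j * (n + 1 + 2) + (n + 1) + 1 - 1) = tc (2 * j) := by
        rw [Nat.add_sub_cancel]; exact ec1
      have hidx2 : j * (n + 1 + 2) + (n + 1) - 1 = j * (n + 1 + 2) + n := by
        generalize j * (n + 1 + 2) = m
        omega
      have e1p : a (j * (n + 1 + 2) + (n + 1) - 1) = ta (j * (n + 1) + n) := by
        rw [hidx2]; exact hblend_a j n (by omega)
      simp only [Bmat]
      rw [e3a, e3b, e3p, e2p, e1p, ec1, ec2, ec3, ec4]
      ext r s
      fin_cases r <;> fin_cases s <;>
        simp [Matrix.mul_apply, Fin.sum_univ_two, Matrix.add_apply, Matrix.smul_apply,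
          smul_eq_mul] <;> ring
    have hfun2 : (fun x : ℝ =>
        (!![0, -1; α (((n + 1 : ℕ) : ℤ) - 1) / α 0, -(2 * x - β 0) / α 0] : Mat2))
        = (fun x : ℝ =>
          (!![0, -1; α (((n + 1 : ℕ) : ℤ) - 1) * (α 0)⁻¹, (α 0)⁻¹ * β 0] : Mat2)
          + x • !![0, 0; 0, -((α 0)⁻¹ + (α 0)⁻¹)]
          + x ^ 2 • (!![0, 0; 0, 0] : Mat2) + x ^ 3 • (!![0, 0; 0, 0] : Mat2)) := by
      funext x
      ext r s
      fin_cases r <;> fin_cases s <;>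
        simp [Matrix.add_apply, Matrix.smul_apply, smul_eq_mul] <;> ring
    rw [hfun, hfun2]
    exact key
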